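/- Let 𝒜 be an abelian category. Let A• : A^{-2} --δ_A--> A^{-1} --λ_A--> A^0 and B• : B^{-2} --δ_B--> B^{-1} --λ_B--> B^0 be cochain complexes concentrated in degrees [-2,0], and let σA• = [A^{-2} → A^{-1} → 0] and σB• = [B^{-2} → B^{-1} → 0] denote their brutal truncations below degree 0 (so H^{-2}(σA•) = ker δ_A and H^{-1}(σA•) = coker δ_A). Let E• be a complex concentrated in degrees [-1,0] and 0 → E• → M• → σA• ⊞ σB• → 0 a short exact sequence of cochain complexes, with connecting homomorphisms ∂ : H^{-2}(σA• ⊞ σB•) → H^{-1}(E•) and ∂' : H^{-1}(σA• ⊞ σB•) → H^0(E•) in the long exact cohomology sequence. Assume: (i) the composite ∂ ∘ inr : H^{-2}(σB•) → H^{-1}(E•) is an isomorphism; (ii) there is a short exact sequence 0 → H^{-1}(σB•) --∂' ∘ inr--> H^0(E•) --ρ--> A^0 → 0; and (iii) ρ ∘ ∂' ∘ inl : coker δ_A → A^0 equals the morphism λ̄_A induced by λ_A on coker δ_A. Then: (a) the composite H^{-2}(M•) → H^{-2}(σA• ⊞ σB•) --fst--> ker δ_A is an isomorphism, so H^{-2}(M•)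 ≅ H^{-2}(A•); (b) the composite H^{-1}(M•) → H^{-1}(σA• ⊞ σB•) --fst--> coker δ_A is a kernel of λ̄_A, so H^{-1}(M•) ≅ H^{-1}(A•) = ker λ_A / im δ_A; and (c) the unique morphism A^0 → H^0(M•) whose composite with ρ is the long-exact-sequence map H^0(E•) → H^0(M•) is a cokernel of λ̄_A, so H^0(M•) ≅ H^0(A•) = coker λ_A. -/

import Mathlib

open CategoryTheory Limits HomologicalComplex ZeroObject

universe v u

variable {𝒜 : Type u} [Category.{v} 𝒜] [Abelian 𝒜]

/-- The brutal (stupid) truncation of a cochain complex below degree `0`: it keeps the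
terms in (strictly) negative degrees and replaces all other terms by `0`.  For a complex
`A•` concentrated in degrees `[-2,0]` this is the complex `[A^{-2} → A^{-1} → 0]`. -/
noncomputable def brutalTrunc (A : CochainComplex 𝒜 ℤ) : CochainComplex 𝒜 ℤ where
  X i := if i < 0 then A.X i else 0
  d i j :=
    if hi : i < 0 then
      if hj : j < 0 then
        eqToHom (if_pos hi) ≫ A.d i j ≫ eqToHom (if_pos hj).symm
      else 0
    else 0
  shape i j hij := by
    try dsimp only
    split_ifs with hi
    · rw [A.shape i j hij]; simp
    · rfl
  d_comp_d' i j k hij hjk := by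
    try dsimp only
    by_cases hi : i < 0 <;> by_cases hj : j < 0 <;> by_cases hk : k < 0 <;>
      simp [hi, hj, hk]

lemma brutalTrunc_X_eq (A : CochainComplex 𝒜 ℤ) {i : ℤ} (hi : i < 0) :
    (brutalTrunc A).X i = A.X i :=
  if_pos hi

/-- The morphism `λ̄_A : coker δ_A ⟶ A^0` induced by `λ_A : A^{-1} ⟶ A^0` for a complex
`A•` concentrated in degrees `[-2,0]`, where `δ_A = d^{-2}` and `λ_A = d^{-1}`. -/
noncomputable def lambdaBar (A : CochainComplex 𝒜 ℤ) :
    cokernel (A.d (-2) (-1)) ⟶ A.X 0 :=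
  cokernel.desc _ (A.d (-1) 0) (A.d_comp_d _ _ _)

section Aux

variable {P Q HP X Z W Y : 𝒜}

lemma aux_mono (il : P ⟶ HP) (ir : Q ⟶ HP) (pl : HP ⟶ P) (pr : HP ⟶ Q)
    (htot : pl ≫ il + pr ≫ ir = 𝟙 HP)
    (m : X ⟶ HP) (hm : Mono m) (d : HP ⟶ Z) (hmd : m ≫ d = 0)
    (hq : Mono (ir ≫ d)) : Mono (m ≫ pl) := by
  rw [Preadditive.mono_iff_cancel_zero]
  intro T t ht
  have h1 : t ≫ m = (t ≫ m ≫ pr) ≫ ir := by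
    calc t ≫ m = (t ≫ m) ≫ (pl ≫ il + pr ≫ ir) := by rw [htot, Category.comp_id]
      _ = (t ≫ m ≫ pl) ≫ il + (t ≫ m ≫ pr) ≫ ir := by
          simp only [Preadditive.comp_add, Category.assoc]
      _ = (t ≫ m ≫ pr) ≫ ir := by
          rw [show t ≫ m ≫ pl = 0 from ht]
          simp
  have h2 : (t ≫ m ≫ pr) ≫ ir ≫ d = 0 := by
    rw [← Category.assoc, ← h1, Category.assoc, hmd, comp_zero]
  have h3 : t ≫ m ≫ pr = 0 :=
    (Preadditive.mono_iff_cancel_zero _).1 hq _ _ h2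
  have h4 : t ≫ m = 0 := by rw [h1, h3, zero_comp]
  exact (Preadditive.mono_iff_cancel_zero m).1 hm _ _ h4

lemma aux_iso (il : P ⟶ HP) (ir : Q ⟶ HP) (pl : HP ⟶ P) (pr : HP ⟶ Q)
    (htot : pl ≫ il + pr ≫ ir = 𝟙 HP) (hil : il ≫ pl = 𝟙 P) (hirl : ir ≫ pl = 0)
    (m : X ⟶ HP) (hm : Mono m) (d : HP ⟶ Z) (hmd : m ≫ d = 0)
    (hker : IsLimit (KernelFork.ofι m hmd))
    (hd : IsIso (ir ≫ d)) : IsIso (m ≫ pl) := by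
  have hmono : Mono (m ≫ pl) := aux_mono il ir pl pr htot m hm d hmd
    (by haveI := hd; infer_instance)
  have hs : (il - (il ≫ d ≫ inv (ir ≫ d)) ≫ ir) ≫ d = 0 := by
    calc (il - (il ≫ d ≫ inv (ir ≫ d)) ≫ ir) ≫ d
        = il ≫ d - (il ≫ d ≫ inv (ir ≫ d)) ≫ (ir ≫ d) := by
          rw [Preadditive.sub_comp, Category.assoc]
      _ = 0 := by
          rw [Category.assoc, Category.assoc, IsIso.inv_hom_id, Category.comp_id, sub_self]
  obtain ⟨l, hl⟩ := KernelFork.IsLimit.lift' hker _ hs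
  simp only [Fork.ι_ofι] at hl
  have hsec : l ≫ m ≫ pl = 𝟙 P := by
    rw [← Category.assoc, hl]
    simp [Preadditive.sub_comp, Category.assoc, hil, hirl]
  haveI : IsSplitEpi (m ≫ pl) := ⟨⟨⟨l, hsec⟩⟩⟩
  haveI := hmono
  exact isIso_of_mono_of_epi _

lemma aux_kernel (il : P ⟶ HP) (ir : Q ⟶ HP) (pl : HP ⟶ P) (pr : HP ⟶ Q)
    (htot : pl ≫ il + pr ≫ ir = 𝟙 HP) (hil : il ≫ pl = 𝟙 P) (hirl : ir ≫ pl = 0)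
    (m : X ⟶ HP) (hm : Mono m) (d : HP ⟶ Z) (hmd : m ≫ d = 0)
    (hker : IsLimit (KernelFork.ofι m hmd))
    (r : Z ⟶ W) (hq0 : (ir ≫ d) ≫ r = 0)
    (hq : IsLimit (KernelFork.ofι (ir ≫ d) hq0)) (hqm : Mono (ir ≫ d))
    (lam : P ⟶ W) (hlam : il ≫ d ≫ r = lam) :
    ∃ w : (m ≫ pl) ≫ lam = 0, Nonempty (IsLimit (KernelFork.ofι (m ≫ pl) w)) := by
  subst hlam
  have hmpl : m ≫ pl ≫ il = m - (m ≫ pr) ≫ ir := by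
    have h := congrArg (fun φ => m ≫ φ) htot
    simp only [Preadditive.comp_add, Category.comp_id] at h
    rw [← Category.assoc, ← Category.assoc] at h
    rw [← Category.assoc]
    exact eq_sub_of_add_eq h
  have w : (m ≫ pl) ≫ il ≫ d ≫ r = 0 := by
    calc (m ≫ pl) ≫ il ≫ d ≫ r = (m ≫ pl ≫ il) ≫ d ≫ r := by
          simp only [Category.assoc]
      _ = (m - (m ≫ pr) ≫ ir) ≫ d ≫ r := by rw [hmpl]
      _ = m ≫ d ≫ r - (m ≫ pr) ≫ (ir ≫ d) ≫ r := by
          simp only [Preadditive.sub_comp, Category.assoc]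
      _ = 0 := by
          rw [hq0, comp_zero, ← Category.assoc, hmd, zero_comp, sub_zero]
  refine ⟨w, ⟨?_⟩⟩
  haveI hmono : Mono (m ≫ pl) := aux_mono il ir pl pr htot m hm d hmd hqm
  apply KernelFork.IsLimit.ofι'
  intro T k hk
  have hb0 : (k ≫ il ≫ d) ≫ r = 0 := by
    simpa only [Category.assoc] using hk
  obtain ⟨b, hb⟩ := KernelFork.IsLimit.lift' hq (k ≫ il ≫ d) hb0
  simp only [Fork.ι_ofι] at hb
  have hs : (k ≫ il - b ≫ ir) ≫ d = 0 := by
    rw [Preadditive.sub_comp, Category.assoc, Category.assoc, hb, sub_self]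
  obtain ⟨l, hl⟩ := KernelFork.IsLimit.lift' hker _ hs
  simp only [Fork.ι_ofι] at hl
  refine ⟨l, ?_⟩
  rw [← Category.assoc, hl, Preadditive.sub_comp, Category.assoc, Category.assoc,
    hil, hirl, Category.comp_id, comp_zero, sub_zero]

lemma aux_coker (il : P ⟶ HP) (ir : Q ⟶ HP) (pl : HP ⟶ P) (pr : HP ⟶ Q)
    (htot : pl ≫ il + pr ≫ ir = 𝟙 HP)
    (d : HP ⟶ Z) (p : Z ⟶ Y) (hpe : Epi p) (hdp : d ≫ p = 0)
    (hp : IsColimit (CokernelCofork.ofπ p hdp))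
    (r : Z ⟶ W) (hre : Epi r) (hq0 : (ir ≫ d) ≫ r = 0)
    (lam : P ⟶ W) (hlam : il ≫ d ≫ r = lam)
    (u : W ⟶ Y) (hu : r ≫ u = p) :
    ∃ w : lam ≫ u = 0, Nonempty (IsColimit (CokernelCofork.ofπ u w)) := by
  subst hlam
  have w : (il ≫ d ≫ r) ≫ u = 0 := by
    simp only [Category.assoc]
    rw [hu, hdp, comp_zero]
  refine ⟨w, ⟨?_⟩⟩
  haveI : Epi u := by
    have : Epi (r ≫ u) := by rw [hu]; exact hpe
    exact epi_of_epi r u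
  apply CokernelCofork.IsColimit.ofπ'
  intro T k hk
  have h1 : il ≫ d ≫ r ≫ k = 0 := by
    simpa only [Category.assoc] using hk
  have h2 : ir ≫ d ≫ r ≫ k = 0 := by
    calc ir ≫ d ≫ r ≫ k = ((ir ≫ d) ≫ r) ≫ k := by simp only [Category.assoc]
      _ = 0 := by rw [hq0, zero_comp]
  have h0 : d ≫ r ≫ k = 0 := by
    calc d ≫ r ≫ k = (pl ≫ il + pr ≫ ir) ≫ d ≫ r ≫ k := by
          rw [htot, Category.id_comp]
      _ = pl ≫ (il ≫ d ≫ r ≫ k) + pr ≫ (ir ≫ d ≫ r ≫ k) := by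
          simp only [Preadditive.add_comp, Category.assoc]
      _ = 0 := by rw [h1, h2]; simp
  obtain ⟨v, hv⟩ := CokernelCofork.IsColimit.desc' hp (r ≫ k) h0
  simp only [Cofork.π_ofπ] at hv
  refine ⟨v, ?_⟩
  rw [← cancel_epi r, ← Category.assoc, hu, hv]

lemma hb_total (A B : CochainComplex 𝒜 ℤ) (i : ℤ) :
    homologyMap (biprod.fst : A ⊞ B ⟶ A) i ≫ homologyMap (biprod.inl : A ⟶ A ⊞ B) i +
      homologyMap (biprod.snd : A ⊞ B ⟶ B) i ≫ homologyMap (biprod.inr : B ⟶ A ⊞ B) i =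
      𝟙 ((A ⊞ B).homology i) := by
  rw [← homologyMap_comp, ← homologyMap_comp, ← homologyMap_add, biprod.total,
    homologyMap_id]

lemma hb_inl_fst (A B : CochainComplex 𝒜 ℤ) (i : ℤ) :
    homologyMap (biprod.inl : A ⟶ A ⊞ B) i ≫ homologyMap (biprod.fst : A ⊞ B ⟶ A) i =
      𝟙 (A.homology i) := by
  rw [← homologyMap_comp, biprod.inl_fst, homologyMap_id]

lemma hb_inr_fst (A B : CochainComplex 𝒜 ℤ) (i : ℤ) :
    homologyMap (biprod.inr : B ⟶ A ⊞ B) i ≫ homologyMap (biprod.fst : A ⊞ B ⟶ A) i = 0 := by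
  rw [← homologyMap_comp, biprod.inr_fst, homologyMap_zero]

lemma isZero_homology_of_isZero_X (K : CochainComplex 𝒜 ℤ) (i : ℤ)
    (h : IsZero (K.X i)) : IsZero (K.homology i) := by
  apply ShortComplex.isZero_homology_of_isZero_X₂ (S := K.sc i)
  exact h

lemma brutal_X_isZero (A : CochainComplex 𝒜 ℤ) (i : ℤ) (h : ¬ i < 0) :
    IsZero ((brutalTrunc A).X i) := by
  dsimp only [brutalTrunc]
  rw [if_neg h]
  exact isZero_zero 𝒜

end Aux

theorem statement7
    (A B E M : CochainComplex 𝒜 ℤ)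
    (hA : ∀ i : ℤ, i < -2 ∨ 0 < i → IsZero (A.X i))
    (hB : ∀ i : ℤ, i < -2 ∨ 0 < i → IsZero (B.X i))
    (hE : ∀ i : ℤ, i ≠ -1 → i ≠ 0 → IsZero (E.X i))
    (f : E ⟶ M) (g : M ⟶ brutalTrunc A ⊞ brutalTrunc B) (hfg : f ≫ g = 0)
    (hS : (ShortComplex.mk f g hfg).ShortExact)
    -- the canonical identification `H^{-2}(σA•) ≅ ker δ_A`
    (e₂ : (brutalTrunc A).homology (-2) ≅ kernel (A.d (-2) (-1)))
    (he₂ : (brutalTrunc A).homologyπ (-2) ≫ e₂.hom ≫ kernel.ι (A.d (-2) (-1)) =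
      (brutalTrunc A).iCycles (-2) ≫ eqToHom (brutalTrunc_X_eq A (by decide)))
    -- the canonical identification `H^{-1}(σA•) ≅ coker δ_A`
    (e₁ : (brutalTrunc A).homology (-1) ≅ cokernel (A.d (-2) (-1)))
    (he₁ : cokernel.π (A.d (-2) (-1)) ≫ e₁.inv ≫ (brutalTrunc A).homologyι (-1) =
      eqToHom (brutalTrunc_X_eq A (by decide)).symm ≫ (brutalTrunc A).pOpcycles (-1))
    (ρ : E.homology 0 ⟶ A.X 0)
    -- (i) `∂ ∘ inr : H^{-2}(σB•) ⟶ H^{-1}(E•)` is an isomorphism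
    (hi : IsIso (homologyMap (biprod.inr : brutalTrunc B ⟶ brutalTrunc A ⊞ brutalTrunc B)
        (-2) ≫ hS.δ (-2) (-1) (by decide)))
    -- (ii) `0 ⟶ H^{-1}(σB•) ⟶ H^0(E•) ⟶ A^0 ⟶ 0` is short exact
    (hii₀ : (homologyMap (biprod.inr : brutalTrunc B ⟶ brutalTrunc A ⊞ brutalTrunc B) (-1)
        ≫ hS.δ (-1) 0 (by decide)) ≫ ρ = 0)
    (hii₁ : Mono (homologyMap
        (biprod.inr : brutalTrunc B ⟶ brutalTrunc A ⊞ brutalTrunc B) (-1)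
        ≫ hS.δ (-1) 0 (by decide)))
    (hii₂ : Epi ρ)
    (hii₃ : IsLimit (KernelFork.ofι _ hii₀))
    -- (iii) `ρ ∘ ∂' ∘ inl = λ̄_A`
    (hiii : e₁.inv ≫
        homologyMap (biprod.inl : brutalTrunc A ⟶ brutalTrunc A ⊞ brutalTrunc B) (-1) ≫
        hS.δ (-1) 0 (by decide) ≫ ρ = lambdaBar A) :
    -- (a)
    IsIso (homologyMap g (-2) ≫
        homologyMap (biprod.fst : brutalTrunc A ⊞ brutalTrunc B ⟶ brutalTrunc A) (-2) ≫
        e₂.hom) ∧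
    -- (b)
    (∃ (w : (homologyMap g (-1) ≫
        homologyMap (biprod.fst : brutalTrunc A ⊞ brutalTrunc B ⟶ brutalTrunc A) (-1) ≫
        e₁.hom) ≫ lambdaBar A = 0),
      Nonempty (IsLimit (KernelFork.ofι (homologyMap g (-1) ≫
        homologyMap (biprod.fst : brutalTrunc A ⊞ brutalTrunc B ⟶ brutalTrunc A) (-1) ≫
        e₁.hom) w))) ∧
    -- (c)
    ((∃! u : A.X 0 ⟶ M.homology 0, ρ ≫ u = homologyMap f 0) ∧
      ∀ u : A.X 0 ⟶ M.homology 0, ρ ≫ u = homologyMap f 0 →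
        ∃ (w' : lambdaBar A ≫ u = 0),
          Nonempty (IsColimit (CokernelCofork.ofπ u w'))) := by
  haveI := hii₂
  -- zero homology facts
  have hE2 : IsZero (E.homology (-2)) :=
    isZero_homology_of_isZero_X E (-2) (hE (-2) (by decide) (by decide))
  have hA0 : IsZero ((brutalTrunc A).homology 0) :=
    isZero_homology_of_isZero_X _ 0 (brutal_X_isZero A 0 (by decide))
  have hB0 : IsZero ((brutalTrunc B).homology 0) :=
    isZero_homology_of_isZero_X _ 0 (brutal_X_isZero B 0 (by decide))
  have hT0 : IsZero ((brutalTrunc A ⊞ brutalTrunc B).homology 0) := by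
    rw [IsZero.iff_id_eq_zero, ← hb_total (brutalTrunc A) (brutalTrunc B) 0,
      hA0.eq_of_tgt (homologyMap biprod.fst 0) 0,
      hB0.eq_of_tgt (homologyMap biprod.snd 0) 0]
    simp
  -- morphism facts in degree -2
  have hf2 : homologyMap f (-2) = 0 := hE2.eq_of_src _ _
  haveI hg2mono : Mono (homologyMap g (-2)) := (hS.homology_exact₂ (-2)).mono_g hf2
  -- morphism facts in degree -1
  haveI hδepi : Epi (hS.δ (-2) (-1) (by decide)) := by
    haveI := hi
    exact epi_of_epi (homologyMap (biprod.inr : brutalTrunc B ⟶ _) (-2)) _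
  have hf1 : homologyMap f (-1) = 0 := by
    have h0 : hS.δ (-2) (-1) (by decide) ≫ homologyMap f (-1) =
        hS.δ (-2) (-1) (by decide) ≫ 0 := by
      rw [comp_zero]
      exact hS.δ_comp (-2) (-1) (by decide)
    exact (cancel_epi _).1 h0
  haveI hg1mono : Mono (homologyMap g (-1)) := (hS.homology_exact₂ (-1)).mono_g hf1
  -- degree 0
  have hg0 : homologyMap g 0 = 0 := hT0.eq_of_tgt _ _
  haveI hf0epi : Epi (homologyMap f 0) := (hS.homology_exact₂ 0).epi_f hg0
  -- twisted biproduct data at degree -1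
  have htot' : (homologyMap (biprod.fst : brutalTrunc A ⊞ brutalTrunc B ⟶ _) (-1) ≫ e₁.hom) ≫
      (e₁.inv ≫ homologyMap (biprod.inl : brutalTrunc A ⟶ _) (-1)) +
      homologyMap (biprod.snd : brutalTrunc A ⊞ brutalTrunc B ⟶ _) (-1) ≫
      homologyMap (biprod.inr : brutalTrunc B ⟶ _) (-1) = 𝟙 _ := by
    rw [← hb_total (brutalTrunc A) (brutalTrunc B) (-1)]
    congr 1
    simp only [Category.assoc, Iso.hom_inv_id_assoc]
  have hil' : (e₁.inv ≫ homologyMap (biprod.inl : brutalTrunc A ⟶ _) (-1)) ≫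
      (homologyMap (biprod.fst : brutalTrunc A ⊞ brutalTrunc B ⟶ _) (-1) ≫ e₁.hom) =
      𝟙 (cokernel (A.d (-2) (-1))) := by
    simp only [Category.assoc]
    rw [← Category.assoc (homologyMap biprod.inl (-1)), hb_inl_fst]
    simp
  have hirl' : homologyMap (biprod.inr : brutalTrunc B ⟶ _) (-1) ≫
      (homologyMap (biprod.fst : brutalTrunc A ⊞ brutalTrunc B ⟶ _) (-1) ≫ e₁.hom) = 0 := by
    rw [← Category.assoc, hb_inr_fst, zero_comp]
  have hlam : (e₁.inv ≫ homologyMap (biprod.inl : brutalTrunc A ⟶ _) (-1)) ≫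
      hS.δ (-1) 0 (by decide) ≫ ρ = lambdaBar A := by
    simpa only [Category.assoc] using hiii
  refine ⟨?_, ?_, ?_⟩
  · -- (a)
    have ha := aux_iso (homologyMap (biprod.inl : brutalTrunc A ⟶ _) (-2))
      (homologyMap (biprod.inr : brutalTrunc B ⟶ _) (-2))
      (homologyMap (biprod.fst : brutalTrunc A ⊞ brutalTrunc B ⟶ _) (-2))
      (homologyMap (biprod.snd : brutalTrunc A ⊞ brutalTrunc B ⟶ _) (-2))
      (hb_total _ _ _) (hb_inl_fst _ _ _) (hb_inr_fst _ _ _)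
      (homologyMap g (-2)) hg2mono (hS.δ (-2) (-1) (by decide))
      (hS.comp_δ (-2) (-1) (by decide))
      ((hS.homology_exact₃ (-2) (-1) (by decide)).fIsKernel) hi
    rw [show homologyMap g (-2) ≫
        homologyMap (biprod.fst : brutalTrunc A ⊞ brutalTrunc B ⟶ _) (-2) ≫ e₂.hom =
        (homologyMap g (-2) ≫
          homologyMap (biprod.fst : brutalTrunc A ⊞ brutalTrunc B ⟶ _) (-2)) ≫ e₂.hom
      from by rw [Category.assoc]]
    haveI := ha
    infer_instance
  · -- (b)
    exact aux_kernel (e₁.inv ≫ homologyMap (biprod.inl : brutalTrunc A ⟶ _) (-1))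
      (homologyMap (biprod.inr : brutalTrunc B ⟶ _) (-1))
      (homologyMap (biprod.fst : brutalTrunc A ⊞ brutalTrunc B ⟶ _) (-1) ≫ e₁.hom)
      (homologyMap (biprod.snd : brutalTrunc A ⊞ brutalTrunc B ⟶ _) (-1))
      htot' hil' hirl'
      (homologyMap g (-1)) hg1mono (hS.δ (-1) 0 (by decide))
      (hS.comp_δ (-1) 0 (by decide))
      ((hS.homology_exact₃ (-1) 0 (by decide)).fIsKernel)
      ρ hii₀ hii₃ hii₁ (lambdaBar A) hlam
  · -- (c)
    have hδf0 : (homologyMap (biprod.inr : brutalTrunc B ⟶ _) (-1) ≫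
        hS.δ (-1) 0 (by decide)) ≫ homologyMap f 0 = 0 := by
      rw [Category.assoc, hS.δ_comp, comp_zero]
    have hcoρ : IsColimit (CokernelCofork.ofπ ρ
        (KernelFork.condition (KernelFork.ofι _ hii₀))) :=
      Abelian.epiIsCokernelOfKernel _ hii₃
    obtain ⟨u, hu⟩ := CokernelCofork.IsColimit.desc' hcoρ (homologyMap f 0)
      hδf0
    simp only [Cofork.π_ofπ] at hu
    constructor
    · exact ⟨u, hu, fun y hy => (cancel_epi ρ).1 (hy.trans hu.symm)⟩
    · intro u' hu'
      have hdp : hS.δ (-1) 0 (by decide) ≫ homologyMap f 0 = 0 :=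
        hS.δ_comp (-1) 0 (by decide)
      have hp : IsColimit (CokernelCofork.ofπ (homologyMap f 0) hdp) :=
        (hS.homology_exact₁ (-1) 0 (by decide)).gIsCokernel
      exact aux_coker (e₁.inv ≫ homologyMap (biprod.inl : brutalTrunc A ⟶ _) (-1))
        (homologyMap (biprod.inr : brutalTrunc B ⟶ _) (-1))
        (homologyMap (biprod.fst : brutalTrunc A ⊞ brutalTrunc B ⟶ _) (-1) ≫ e₁.hom)
        (homologyMap (biprod.snd : brutalTrunc A ⊞ brutalTrunc B ⟶ _) (-1))
        htot' (hS.δ (-1) 0 (by decide)) (homologyMap f 0) hf0epi hdp hp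
        ρ hii₂ hii₀ (lambdaBar A) hlam u' hu'
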